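/- The improper integral ∫₁^∞ t^(−3/4)·(t−1)^(−3/4) dt converges and equals (1/√2) · ∫₀¹ t^(−3/4)·(1−t)^(−3/4) dt. -/

import Mathlib

open MeasureTheory

lemma beta_aux (p q : ℝ) (hp : 0 < p) (hq : 0 < q) :
    IntegrableOn (fun t : ℝ => t ^ (p - 1) * (1 - t) ^ (q - 1)) (Set.Ioo (0:ℝ) 1) ∧
    ∫ t in Set.Ioo (0:ℝ) 1, t ^ (p - 1) * (1 - t) ^ (q - 1) =
      Real.Gamma p * Real.Gamma q / Real.Gamma (p + q) := by
  have hpc : 0 < (Complex.ofReal p).re := by simpa using hp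
  have hqc : 0 < (Complex.ofReal q).re := by simpa using hq
  have hconv := Complex.betaIntegral_convergent hpc hqc
  have hIoc : IntegrableOn (fun x : ℝ => (x:ℂ) ^ ((p:ℂ) - 1) * (1 - (x:ℂ)) ^ ((q:ℂ) - 1))
      (Set.Ioc (0:ℝ) 1) := by
    rwa [intervalIntegrable_iff_integrableOn_Ioc_of_le zero_le_one] at hconv
  have hIoo := hIoc.mono_set Set.Ioo_subset_Ioc_self
  have heq : ∀ x ∈ Set.Ioo (0:ℝ) 1,
      ((x ^ (p - 1) * (1 - x) ^ (q - 1) : ℝ) : ℂ)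
        = (x:ℂ) ^ ((p:ℂ) - 1) * (1 - (x:ℂ)) ^ ((q:ℂ) - 1) := by
    intro x hx
    rw [Complex.ofReal_mul, Complex.ofReal_cpow hx.1.le, Complex.ofReal_cpow (by linarith [hx.2])]
    push_cast
    ring_nf
  have hint : IntegrableOn (fun t : ℝ => t ^ (p - 1) * (1 - t) ^ (q - 1)) (Set.Ioo (0:ℝ) 1) := by
    have : IntegrableOn (fun x : ℝ =>
        ((x:ℂ) ^ ((p:ℂ) - 1) * (1 - (x:ℂ)) ^ ((q:ℂ) - 1)).re) (Set.Ioo (0:ℝ) 1) :=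
      hIoo.re
    refine (integrableOn_congr_fun (fun x hx => ?_) measurableSet_Ioo).mp this
    rw [← heq x hx, Complex.ofReal_re]
  refine ⟨hint, ?_⟩
  have h1 : ((∫ t in Set.Ioo (0:ℝ) 1, t ^ (p - 1) * (1 - t) ^ (q - 1) : ℝ) : ℂ)
      = Complex.betaIntegral p q :=
    calc ((∫ t in Set.Ioo (0:ℝ) 1, t ^ (p - 1) * (1 - t) ^ (q - 1) : ℝ) : ℂ)
        = ∫ t in Set.Ioo (0:ℝ) 1, ((t ^ (p - 1) * (1 - t) ^ (q - 1) : ℝ) : ℂ) :=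
          integral_ofReal.symm
      _ = ∫ t in Set.Ioo (0:ℝ) 1, (t:ℂ) ^ ((p:ℂ) - 1) * (1 - (t:ℂ)) ^ ((q:ℂ) - 1) :=
          setIntegral_congr_fun measurableSet_Ioo heq
      _ = ∫ t in Set.Ioc (0:ℝ) 1, (t:ℂ) ^ ((p:ℂ) - 1) * (1 - (t:ℂ)) ^ ((q:ℂ) - 1) :=
          (integral_Ioc_eq_integral_Ioo).symm
      _ = Complex.betaIntegral p q := by
          rw [Complex.betaIntegral, intervalIntegral.integral_of_le zero_le_one]
  have h2 := Complex.Gamma_mul_Gamma_eq_betaIntegral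
    (s := (p:ℂ)) (t := (q:ℂ)) (by simpa using hp) (by simpa using hq)
  rw [← h1, ← Complex.ofReal_add, Complex.Gamma_ofReal, Complex.Gamma_ofReal,
    Complex.Gamma_ofReal, ← Complex.ofReal_mul, ← Complex.ofReal_mul] at h2
  have h3 := Complex.ofReal_inj.mp h2
  have hG : Real.Gamma (p + q) ≠ 0 := (Real.Gamma_pos_of_pos (by linarith)).ne'
  field_simp [h3]
  rw [h3]; ring

lemma subst_aux :
    (Set.Ioi (1:ℝ) = (fun u : ℝ => u⁻¹) '' Set.Ioo (0:ℝ) 1) ∧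
    (∀ u ∈ Set.Ioo (0:ℝ) 1, HasDerivWithinAt (fun y : ℝ => y⁻¹) (-(u^2)⁻¹) (Set.Ioo (0:ℝ) 1) u) ∧
    Set.InjOn (fun u : ℝ => u⁻¹) (Set.Ioo (0:ℝ) 1) := by
  refine ⟨?_, fun u hu => (hasDerivAt_inv hu.1.ne').hasDerivWithinAt,
    inv_injective.injOn⟩
  ext x
  constructor
  · intro hx
    exact ⟨x⁻¹, ⟨inv_pos.mpr (by linarith [Set.mem_Ioi.mp hx]),
      inv_lt_one_of_one_lt₀ hx⟩, inv_inv x⟩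
  · rintro ⟨u, ⟨hu0, hu1⟩, rfl⟩
    exact Set.mem_Ioi.mpr (one_lt_inv_iff₀.mpr ⟨hu0, hu1⟩)

lemma point_aux (u : ℝ) (hu : u ∈ Set.Ioo (0:ℝ) 1) :
    |(-(u^2)⁻¹)| • ((u⁻¹) ^ (-3/4 : ℝ) * (u⁻¹ - 1) ^ (-3/4 : ℝ))
      = u ^ ((1:ℝ)/2 - 1) * (1 - u) ^ ((1:ℝ)/4 - 1) := by
  obtain ⟨hu0, hu1⟩ := hu
  have h1u : (0:ℝ) ≤ 1 - u := by linarith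
  have habs : |(-(u^2)⁻¹)| = u ^ (-2 : ℝ) := by
    rw [abs_neg, abs_inv, abs_of_nonneg (sq_nonneg u), ← Real.rpow_natCast u 2,
      ← Real.rpow_neg hu0.le]
    norm_num
  have hsub : u⁻¹ - 1 = (1 - u) * u⁻¹ := by field_simp
  rw [smul_eq_mul, habs, hsub, Real.mul_rpow h1u (inv_nonneg.mpr hu0.le),
    Real.inv_rpow hu0.le, ← Real.rpow_neg hu0.le]
  rw [show (u ^ (-2:ℝ) * (u ^ (-(-3/4):ℝ) * ((1-u) ^ (-3/4:ℝ) * u ^ (-(-3/4):ℝ)))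
      = (u ^ (-2:ℝ) * u ^ (-(-3/4):ℝ) * u ^ (-(-3/4):ℝ)) * (1-u) ^ (-3/4:ℝ)) from by ring,
    ← Real.rpow_add hu0, ← Real.rpow_add hu0]
  norm_num

theorem stmt_17 :
    IntegrableOn (fun t : ℝ => t ^ (-3 / 4 : ℝ) * (t - 1) ^ (-3 / 4 : ℝ))
      (Set.Ioi (1 : ℝ)) ∧
    ∫ t in Set.Ioi (1 : ℝ), t ^ (-3 / 4 : ℝ) * (t - 1) ^ (-3 / 4 : ℝ) =
      (1 / Real.sqrt 2) *
        ∫ t in Set.Ioo (0 : ℝ) 1, t ^ (-3 / 4 : ℝ) * (1 - t) ^ (-3 / 4 : ℝ) := by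
  obtain ⟨himg, hderiv, hinj⟩ := subst_aux
  set g : ℝ → ℝ := fun t => t ^ (-3 / 4 : ℝ) * (t - 1) ^ (-3 / 4 : ℝ) with hg
  have hpoint : ∀ u ∈ Set.Ioo (0:ℝ) 1,
      |(-(u^2)⁻¹)| • g u⁻¹ = u ^ ((1:ℝ)/2 - 1) * (1 - u) ^ ((1:ℝ)/4 - 1) := by
    intro u hu
    exact point_aux u hu
  obtain ⟨hK_int, hK_val⟩ := beta_aux (1/2) (1/4) (by norm_num) (by norm_num)
  obtain ⟨hJ_int, hJ_val⟩ := beta_aux (1/4) (1/4) (by norm_num) (by norm_num)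
  have hJeq : ∀ t ∈ Set.Ioo (0:ℝ) 1,
      t ^ ((1:ℝ)/4 - 1) * (1 - t) ^ ((1:ℝ)/4 - 1)
        = t ^ (-3 / 4 : ℝ) * (1 - t) ^ (-3 / 4 : ℝ) := by
    intro t _; norm_num
  constructor
  · rw [himg, integrableOn_image_iff_integrableOn_abs_deriv_smul measurableSet_Ioo hderiv hinj g]
    exact (integrableOn_congr_fun hpoint measurableSet_Ioo).mpr hK_int
  · have hI : ∫ t in Set.Ioi (1:ℝ), g t
        = Real.Gamma (1/2) * Real.Gamma (1/4) / Real.Gamma (1/2 + 1/4) := by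
      rw [himg, integral_image_eq_integral_abs_deriv_smul measurableSet_Ioo hderiv hinj g,
        setIntegral_congr_fun measurableSet_Ioo hpoint, hK_val]
    have hJ : ∫ t in Set.Ioo (0:ℝ) 1, t ^ (-3 / 4 : ℝ) * (1 - t) ^ (-3 / 4 : ℝ)
        = Real.Gamma (1/4) * Real.Gamma (1/4) / Real.Gamma (1/4 + 1/4) := by
      rw [← hJ_val]
      exact (setIntegral_congr_fun measurableSet_Ioo hJeq).symm
    rw [hI, hJ]
    have hdup := Real.Gamma_mul_Gamma_add_half (1/4)
    have h34 : (1:ℝ)/4 + 1/2 = 3/4 := by norm_num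
    have h12 : 2 * ((1:ℝ)/4) = 1/2 := by norm_num
    rw [h34, h12, Real.Gamma_one_half_eq] at hdup
    have h2half : ((2:ℝ)) ^ ((1:ℝ) - 1/2) = Real.sqrt 2 := by
      rw [show ((1:ℝ) - 1/2) = 1/2 by norm_num, ← Real.sqrt_eq_rpow]
    rw [h2half] at hdup
    have hpi : Real.sqrt Real.pi * Real.sqrt Real.pi = Real.pi := Real.mul_self_sqrt Real.pi_pos.le
    have hq14 : (0:ℝ) < Real.Gamma (1/4) := Real.Gamma_pos_of_pos (by norm_num)
    have hq34 : (0:ℝ) < Real.Gamma (3/4) := Real.Gamma_pos_of_pos (by norm_num)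
    have hs2 : (0:ℝ) < Real.sqrt 2 := Real.sqrt_pos.mpr (by norm_num)
    have hspi : (0:ℝ) < Real.sqrt Real.pi := Real.sqrt_pos.mpr Real.pi_pos
    have h3412 : (1:ℝ)/2 + 1/4 = 3/4 := by norm_num
    have h1412 : (1:ℝ)/4 + 1/4 = 1/2 := by norm_num
    rw [h3412, h1412, Real.Gamma_one_half_eq]
    field_simp
    nlinarith [hdup, hpi, mul_pos hq14 hq34, mul_pos hs2 hspi]
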